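/- Let n ∈ ℕ with n ≥ 3, let 𝒢=(G,w) be a connected positive-weighted graph with exactly n vertices, labelled 1,…,n, and define D_{î} = D_{[n]∖{i}}(𝒢) for each i ∈ [n]. Then for every i ∈ [n] one has (n−2)·D_{î} ≤ Σ_{j ∈ [n]∖{i}} D_{ĵ}. -/

import Mathlib

open SimpleGraph Finset

/-- The total weight of a subgraph: the sum of the weights of its edges. -/
noncomputable def subgraphWeight {V : Type} [Fintype V] {G : SimpleGraph V}
    (w : Sym2 V → ℝ) (R : G.Subgraph) : ℝ :=
  ∑ e ∈ (Set.toFinite R.edgeSet).toFinset, w e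

/-- `graphDist G w I` is the minimum of `subgraphWeight w R` over connected
subgraphs `R` of `G` whose vertex set contains `I`. -/
noncomputable def graphDist {V : Type} [Fintype V] (G : SimpleGraph V)
    (w : Sym2 V → ℝ) (I : Set V) : ℝ :=
  sInf { x : ℝ | ∃ R : G.Subgraph, R.Connected ∧ I ⊆ R.verts ∧ subgraphWeight w R = x }

/-- A weight function is positive on a graph if every edge has positive weight. -/
def PosWeighted {V : Type} (G : SimpleGraph V) (w : Sym2 V → ℝ) : Prop :=
  ∀ e ∈ G.edgeSet, 0 < w e

/-- `Dhat G w i` is the `(n-1)`-weight `D_{[n]∖{i}}(𝒢)` for a graph on vertex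
set `Fin n`. -/
noncomputable def Dhat {n : ℕ} (G : SimpleGraph (Fin n)) (w : Sym2 (Fin n) → ℝ)
    (i : Fin n) : ℝ :=
  graphDist G w {j | j ≠ i}

/- ### Auxiliary lemmas -/

lemma subgraphWeight_nonneg {V : Type} [Fintype V] {G : SimpleGraph V}
    {w : Sym2 V → ℝ} (hw : PosWeighted G w) (R : G.Subgraph) :
    0 ≤ subgraphWeight w R := by
  refine Finset.sum_nonneg fun e he => ?_
  rw [Set.Finite.mem_toFinset] at he
  exact (hw e (R.edgeSet_subset he)).le

lemma graphDist_bddBelow {V : Type} [Fintype V] {G : SimpleGraph V}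
    {w : Sym2 V → ℝ} (hw : PosWeighted G w) (I : Set V) :
    BddBelow { x : ℝ | ∃ R : G.Subgraph, R.Connected ∧ I ⊆ R.verts ∧ subgraphWeight w R = x } := by
  refine ⟨0, ?_⟩
  rintro x ⟨R, -, -, rfl⟩
  exact subgraphWeight_nonneg hw R

lemma graphDist_le {V : Type} [Fintype V] {G : SimpleGraph V}
    {w : Sym2 V → ℝ} (hw : PosWeighted G w) {I : Set V} (R : G.Subgraph)
    (h1 : R.Connected) (h2 : I ⊆ R.verts) :
    graphDist G w I ≤ subgraphWeight w R :=
  csInf_le (graphDist_bddBelow hw I) ⟨R, h1, h2, rfl⟩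

lemma le_graphDist {V : Type} [Fintype V] {G : SimpleGraph V}
    {w : Sym2 V → ℝ} (hG : G.Connected) {I : Set V} {c : ℝ}
    (h : ∀ R : G.Subgraph, R.Connected → I ⊆ R.verts → c ≤ subgraphWeight w R) :
    c ≤ graphDist G w I := by
  refine le_csInf ⟨subgraphWeight w ⊤, ⊤, ?_, by simp, rfl⟩ ?_
  · rw [Subgraph.connected_iff']
    exact (Subgraph.topIso (G := G)).connected_iff.mpr hG
  · rintro x ⟨R, h1, h2, rfl⟩
    exact h R h1 h2

/-- Theorem 4.1, necessity, part (i): the `(n-1)`-weights of a connected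
positive-weighted graph with exactly `n` vertices satisfy
`(n-2)·D_î ≤ ∑_{j≠i} D_ĵ`. -/
theorem graph_exactly_n_vertices_ineq {n : ℕ} (hn : 3 ≤ n)
    (G : SimpleGraph (Fin n)) (w : Sym2 (Fin n) → ℝ)
    (hG : G.Connected) (hw : PosWeighted G w) :
    ∀ i : Fin n, ((n : ℝ) - 2) * Dhat G w i ≤ ∑ j ∈ Finset.univ.erase i, Dhat G w j := by
  classical
  intro i
  -- every vertex has a neighbour
  have hadj : ∀ v : Fin n, ∃ u, G.Adj v u := by
    intro v
    have hne : (⟨0, by omega⟩ : Fin n) ≠ ⟨1, by omega⟩ := by simp [Fin.ext_iff]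
    obtain ⟨u, hu⟩ : ∃ u : Fin n, u ≠ v := by
      rcases eq_or_ne (⟨0, by omega⟩ : Fin n) v with h | h
      · exact ⟨⟨1, by omega⟩, by rw [← h]; exact hne.symm⟩
      · exact ⟨_, h⟩
    obtain ⟨p⟩ := hG.preconnected v u
    cases p with
    | nil => exact absurd rfl hu
    | cons h q => exact ⟨_, h⟩
  set nbr : Fin n → Finset (Fin n) := fun v => Finset.univ.filter (fun u => G.Adj v u) with hnbr_def
  have hnbr : ∀ v, (nbr v).Nonempty := by
    intro v; obtain ⟨u, hu⟩ := hadj v; exact ⟨u, by simp [hnbr_def, hu]⟩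
  set m : Fin n → ℝ := fun v => (nbr v).inf' (hnbr v) (fun u => w s(v, u)) with hm_def
  have hm_le : ∀ v u, G.Adj v u → m v ≤ w s(v, u) := by
    intro v u h
    exact Finset.inf'_le _ (by simp [hnbr_def, h])
  have hm_ex : ∀ v, ∃ u, G.Adj v u ∧ m v = w s(v, u) := by
    intro v
    obtain ⟨u, hu, he⟩ := Finset.exists_mem_eq_inf' (hnbr v) (fun u => w s(v, u))
    exact ⟨u, by simpa [hnbr_def] using hu, he⟩
  -- Lemma A : Dhat i ≤ Dhat j + m j
  have lemA : ∀ j : Fin n, j ≠ i → Dhat G w i ≤ Dhat G w j + m j := by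
    intro j hji
    obtain ⟨u, hu, hmu⟩ := hm_ex j
    have : Dhat G w i - m j ≤ Dhat G w j := by
      refine le_graphDist hG ?_
      intro R hR hRv
      rw [sub_le_iff_le_add]
      set R' : G.Subgraph := R ⊔ G.subgraphOfAdj hu with hR'_def
      have huR : u ∈ R.verts := hRv (show u ≠ j from hu.ne')
      have hconn' : R'.Connected := by
        refine Subgraph.connected_sup hR.preconnected (Subgraph.subgraphOfAdj_connected hu).preconnected ⟨u, ?_⟩
        constructor
        · exact huR
        · simp
      have hverts' : {k : Fin n | k ≠ i} ⊆ R'.verts := by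
        intro k _
        rcases eq_or_ne k j with rfl | hkj
        · rw [hR'_def]; right; simp
        · rw [hR'_def]; left; exact hRv hkj
      have h1 : Dhat G w i ≤ subgraphWeight w R' := graphDist_le hw R' hconn' hverts'
      have h2 : subgraphWeight w R' ≤ subgraphWeight w R + w s(j, u) := by
        have hsub : (Set.toFinite R'.edgeSet).toFinset ⊆
            insert s(j, u) (Set.toFinite R.edgeSet).toFinset := by
          intro e he
          rw [Set.Finite.mem_toFinset] at he
          rw [hR'_def, Subgraph.edgeSet_sup, edgeSet_subgraphOfAdj] at he
          rcases he with he | he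
          · exact Finset.mem_insert_of_mem (by rwa [Set.Finite.mem_toFinset])
          · rw [Set.mem_singleton_iff] at he
            rw [he]
            exact Finset.mem_insert_self _ _
        have hnn : ∀ e ∈ insert s(j, u) (Set.toFinite R.edgeSet).toFinset, 0 ≤ w e := by
          intro e he
          rcases Finset.mem_insert.mp he with rfl | he
          · exact (hw _ hu).le
          · rw [Set.Finite.mem_toFinset] at he
            exact (hw e (R.edgeSet_subset he)).le
        calc subgraphWeight w R'
            ≤ ∑ e ∈ insert s(j, u) (Set.toFinite R.edgeSet).toFinset, w e := by
              refine Finset.sum_le_sum_of_subset_of_nonneg hsub fun e he _ => hnn e he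
          _ ≤ subgraphWeight w R + w s(j, u) := by
              by_cases hmem : s(j, u) ∈ (Set.toFinite R.edgeSet).toFinset
              · rw [Finset.insert_eq_self.mpr hmem]
                have : 0 ≤ w s(j, u) := (hw _ hu).le
                unfold subgraphWeight; linarith
              · rw [Finset.sum_insert hmem]
                unfold subgraphWeight; linarith
      calc Dhat G w i ≤ subgraphWeight w R + w s(j, u) := h1.trans h2
        _ = subgraphWeight w R + m j := by rw [hmu]
    linarith
  -- Lemma B : M - m j ≤ Dhat j
  have lemB : ∀ j ∈ Finset.univ.erase i,
      ∑ v ∈ (Finset.univ.erase i).erase j, m v ≤ Dhat G w j := by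
    intro j hj
    have hji : j ≠ i := Finset.ne_of_mem_erase hj
    refine le_graphDist hG ?_
    intro R hR hRv
    have hiR : i ∈ R.verts := hRv (show i ≠ j from hji.symm)
    have hcoe : R.coe.Connected := hR.coe
    set d : Fin n → ℕ := fun v =>
      if h : v ∈ R.verts then R.coe.dist ⟨v, h⟩ ⟨i, hiR⟩ else 0 with hd_def
    have step : ∀ v, v ∈ R.verts → v ≠ i → ∃ u, R.Adj v u ∧ d u < d v := by
      intro v hv hvi
      have hdne : R.coe.dist ⟨v, hv⟩ ⟨i, hiR⟩ ≠ 0 := by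
        rw [SimpleGraph.dist_ne_zero_iff_ne_and_reachable]
        exact ⟨fun h => hvi (congrArg Subtype.val h), hcoe.preconnected _ _⟩
      obtain ⟨p, hp⟩ := SimpleGraph.exists_walk_of_dist_ne_zero hdne
      cases p with
      | nil => simp at hp; simp at hdne
      | @cons _ b _ hadj' q =>
        refine ⟨b.1, hadj', ?_⟩
        have h1 : d b.1 ≤ q.length := by
          rw [hd_def]
          simp only [dif_pos b.2]
          have := SimpleGraph.dist_le q
          simpa using this
        have h2 : d v = q.length + 1 := by
          rw [hd_def]
          simp only [dif_pos hv]
          rw [← hp]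
          simp [SimpleGraph.Walk.length_cons]
        omega
    set T : Finset (Fin n) := (Finset.univ.erase i).erase j with hT_def
    have hTmem : ∀ v ∈ T, v ∈ R.verts ∧ v ≠ i := by
      intro v hv
      rw [hT_def] at hv
      have hvj : v ≠ j := Finset.ne_of_mem_erase hv
      have hvi : v ≠ i := Finset.ne_of_mem_erase (Finset.mem_of_mem_erase hv)
      exact ⟨hRv hvj, hvi⟩
    set f : Fin n → Sym2 (Fin n) := fun v =>
      if h : ∃ u, R.Adj v u ∧ d u < d v then s(v, Classical.choose h) else s(v, v) with hf_def
    have hfspec : ∀ v ∈ T, ∃ u, f v = s(v, u) ∧ R.Adj v u ∧ d u < d v := by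
      intro v hv
      obtain ⟨hvR, hvi⟩ := hTmem v hv
      have h := step v hvR hvi
      refine ⟨Classical.choose h, ?_, Classical.choose_spec h⟩
      rw [hf_def]; simp only [dif_pos h]
    have hinj : ∀ v1 ∈ T, ∀ v2 ∈ T, f v1 = f v2 → v1 = v2 := by
      intro v1 hv1 v2 hv2 hfe
      obtain ⟨u1, he1, ha1, hd1⟩ := hfspec v1 hv1
      obtain ⟨u2, he2, ha2, hd2⟩ := hfspec v2 hv2
      rw [he1, he2, Sym2.eq_iff] at hfe
      rcases hfe with ⟨h, -⟩ | ⟨h1, h2⟩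
      · exact h
      · subst h1; subst h2; omega
    have himg : T.image f ⊆ (Set.toFinite R.edgeSet).toFinset := by
      intro e he
      rw [Finset.mem_image] at he
      obtain ⟨v, hv, rfl⟩ := he
      obtain ⟨u, he1, ha1, -⟩ := hfspec v hv
      rw [Set.Finite.mem_toFinset, he1]
      exact ha1
    calc ∑ v ∈ T, m v
        ≤ ∑ v ∈ T, w (f v) := by
          refine Finset.sum_le_sum fun v hv => ?_
          obtain ⟨u, he1, ha1, -⟩ := hfspec v hv
          rw [he1]
          exact hm_le v u ha1.adj_sub
      _ = ∑ e ∈ T.image f, w e := (Finset.sum_image hinj).symm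
      _ ≤ subgraphWeight w R := by
          refine Finset.sum_le_sum_of_subset_of_nonneg himg fun e he _ => ?_
          rw [Set.Finite.mem_toFinset] at he
          exact (hw e (R.edgeSet_subset he)).le
  -- combine
  set Di := Dhat G w i with hDi
  set M : ℝ := ∑ v ∈ Finset.univ.erase i, m v with hM
  set C : ℝ := max Di M with hC
  have key : ∀ j ∈ Finset.univ.erase i, C - m j ≤ Dhat G w j := by
    intro j hj
    have hsum : ∑ v ∈ (Finset.univ.erase i).erase j, m v = M - m j := by
      rw [hM, ← Finset.add_sum_erase _ m hj]; ring
    rcases max_cases Di M with ⟨hCeq, -⟩ | ⟨hCeq, -⟩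
    · rw [hC, hCeq]
      have := lemA j (Finset.ne_of_mem_erase hj)
      linarith
    · rw [hC, hCeq]
      have := lemB j hj
      linarith
  have hsum2 : ∑ j ∈ Finset.univ.erase i, (C - m j) ≤ ∑ j ∈ Finset.univ.erase i, Dhat G w j :=
    Finset.sum_le_sum key
  have hcard : (Finset.univ.erase i).card = n - 1 := by
    rw [Finset.card_erase_of_mem (Finset.mem_univ i), Finset.card_univ, Fintype.card_fin]
  have hsum3 : ∑ j ∈ Finset.univ.erase i, (C - m j) = ((n : ℝ) - 1) * C - M := by
    rw [Finset.sum_sub_distrib, Finset.sum_const, hcard, ← hM, nsmul_eq_mul]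
    have : ((n - 1 : ℕ) : ℝ) = (n : ℝ) - 1 := by
      have : (1 : ℕ) ≤ n := by omega
      push_cast [Nat.cast_sub this]
      ring
    rw [this]
  have hDiC : Di ≤ C := le_max_left _ _
  have hMC : M ≤ C := le_max_right _ _
  have hn2 : (0 : ℝ) ≤ (n : ℝ) - 2 := by
    have : (3 : ℝ) ≤ (n : ℝ) := by exact_mod_cast hn
    linarith
  have hfin : ((n : ℝ) - 2) * Di ≤ ((n : ℝ) - 1) * C - M := by
    have h1 : ((n : ℝ) - 2) * Di ≤ ((n : ℝ) - 2) * C := mul_le_mul_of_nonneg_left hDiC hn2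
    nlinarith
  linarith [hsum2, hsum3.symm.le]
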